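/- arXiv:2602.08954 — 2 statements merged into one kernel-verified Lean document; each statement's English description precedes it below -/
import Mathlib

section
/- Let C be a monoidal category and A an algebra (monoid object) in C. The free module functor - ⊗ A : C → Mod_A(C) is separable if and only if the unit morphism u_A : 1 → A is a split monomorphism in C. -/
/-!
STATEMENT 2: Let `C` be a monoidal category and `A` an algebra (monoid object) in
`C`. The free module functor `C ⥤ Mod_A(C)` is separable if and only if the unit
morphism `u_A : 𝟙_C ⟶ A` is a split monomorphism in `C`.
(We use Mathlib's left module objects, so the free module functor is `A ⊗ -`;
by [BZ26, Proposition 3.20] this is interchangeable with `- ⊗ A`.)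
-/

open CategoryTheory CategoryTheory.Limits MonoidalCategory

universe v u v₂ u₂

/-- The data exhibiting a functor `F` as separable: a natural retraction of the map
`Hom(X, Y) → Hom(F X, F Y)`. -/
structure CategoryTheory.Functor.SeparabilityStructure {C : Type u} [Category.{v} C]
    {D : Type u₂} [Category.{v₂} D] (F : C ⥤ D) where
  retr : ∀ {X Y : C}, (F.obj X ⟶ F.obj Y) → (X ⟶ Y)
  naturality : ∀ {X X' Y Y' : C} (u : X' ⟶ X) (v : Y ⟶ Y') (h : F.obj X ⟶ F.obj Y),
    retr (F.map u ≫ h ≫ F.map v) = u ≫ retr h ≫ v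
  retr_map : ∀ {X Y : C} (f : X ⟶ Y), retr (F.map f) = f

/-- A functor is separable if `Hom(-,-) → Hom(F-,F-)` admits a natural retraction. -/
def CategoryTheory.Functor.Separable {C : Type u} [Category.{v} C]
    {D : Type u₂} [Category.{v₂} D] (F : C ⥤ D) : Prop :=
  Nonempty F.SeparabilityStructure

variable {C : Type u} [Category.{v} C] [MonoidalCategory C]

/-- The free module functor by an algebra `A`, sending `M` to the free `A`-module `A ⊗ M`. -/
def freeMod (A : Mon C) : C ⥤ Mod C A.X where
  obj M :=
    letI : ModObj A.X (A.X ⊗ M) :=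
      { smul := (α_ A.X A.X M).inv ≫ (A.mon.mul ▷ M)
        one_smul := by
          dsimp
          rw [associator_inv_naturality_left_assoc, ← comp_whiskerRight, MonObj.one_mul,
            leftUnitor_tensor_hom]
        mul_smul := by
          change (A.mon.mul ▷ (A.X ⊗ M)) ≫ ((α_ A.X A.X M).inv ≫ (A.mon.mul ▷ M)) =
            (α_ A.X A.X (A.X ⊗ M)).hom ≫ A.X ◁ ((α_ A.X A.X M).inv ≫ (A.mon.mul ▷ M)) ≫
              ((α_ A.X A.X M).inv ≫ (A.mon.mul ▷ M))
          slice_lhs 1 2 => rw [associator_inv_naturality_left]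
          slice_lhs 2 3 => rw [← comp_whiskerRight, MonObj.mul_assoc]
          simp only [MonoidalCategory.whiskerLeft_comp, comp_whiskerRight, Category.assoc]
          coherence }
    ⟨A.X ⊗ M⟩
  map {X Y} f := Mod.Hom.mk' (A.X ◁ f) (by
    change ((α_ A.X A.X X).inv ≫ (A.mon.mul ▷ X)) ≫ A.X ◁ f =
      A.X ◁ A.X ◁ f ≫ ((α_ A.X A.X Y).inv ≫ (A.mon.mul ▷ Y))
    rw [Category.assoc, ← whisker_exchange, associator_inv_naturality_right_assoc])
  map_id M := by ext; exact MonoidalCategory.whiskerLeft_id A.X M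
  map_comp f g := by ext; exact MonoidalCategory.whiskerLeft_comp A.X f g

/-- The counit of the free-forgetful adjunction at a module `M`. -/
def counitAux {A : Mon C} (M : Mod C A.X) : (freeMod A).obj M.X ⟶ M :=
  Mod.Hom.mk' (ModObj.smul (M := A.X) (X := M.X)) (by
    change ((α_ A.X A.X M.X).inv ≫ (A.mon.mul ▷ M.X)) ≫ _ = _
    rw [Category.assoc]; exact M.assoc_flip.symm)

lemma unit_counit_aux {A : Mon C} (X : C) :
    (freeMod A).map ((λ_ X).inv ≫ A.mon.one ▷ X) ≫ counitAux ((freeMod A).obj X) = 𝟙 _ := by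
  ext
  dsimp [freeMod, counitAux, Mod.Hom.mk']
  simp only [MonoidalCategory.whiskerLeft_comp, Category.assoc]
  change _ ≫ _ ≫ ((α_ A.X A.X X).inv ≫ (A.mon.mul ▷ X)) = 𝟙 (A.X ⊗ X)
  slice_lhs 2 3 => rw [associator_inv_naturality_middle]
  slice_lhs 3 4 => rw [← comp_whiskerRight, MonObj.mul_one]
  coherence

/-- The free module functor is separable iff the unit of the algebra is a split mono. -/
theorem freeMod_separable_iff_isSplitMono_one (A : Mon C) :
    (freeMod A).Separable ↔ IsSplitMono A.mon.one := by
  constructor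
  · rintro ⟨S⟩
    refine IsSplitMono.mk' ⟨(ρ_ A.X).inv ≫ S.retr (counitAux ((freeMod A).obj (𝟙_ C))), ?_⟩
    have h := S.naturality ((λ_ (𝟙_ C)).inv ≫ A.mon.one ▷ 𝟙_ C) (𝟙 (𝟙_ C))
      (counitAux ((freeMod A).obj (𝟙_ C)))
    erw [CategoryTheory.Functor.map_id, Category.comp_id, Category.comp_id, unit_counit_aux,
      ← CategoryTheory.Functor.map_id (freeMod A), S.retr_map] at h
    rw [rightUnitor_inv_naturality_assoc, ← unitors_inv_equal, ← Category.assoc]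
    exact h.symm
  · rintro ⟨⟨r, hr⟩⟩
    refine ⟨⟨fun {X Y} h => (λ_ X).inv ≫ A.mon.one ▷ X ≫ h.hom ≫ r ▷ Y ≫ (λ_ Y).hom,
      ?_, ?_⟩⟩
    · intro X X' Y Y' u v h
      dsimp [freeMod, Mod.Hom.mk']
      erw [Mod.comp_hom']
      simp only [Category.assoc]
      rw [← whisker_exchange_assoc A.mon.one u, whisker_exchange_assoc r v,
        ← leftUnitor_inv_naturality_assoc, leftUnitor_naturality]
    · intro X Y f
      dsimp [freeMod, Mod.Hom.mk']
      rw [whisker_exchange_assoc, ← comp_whiskerRight_assoc, hr, id_whiskerRight,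
        Category.id_comp, leftUnitor_naturality, Iso.inv_hom_id_assoc]
end

section
/- Let C be a monoidal category with unit object 1 decomposing as a finite biproduct 1 = ⨁_{i∈I} 1_i where 1_i ⊗ 1_j = 0 for i ≠ j. Then each 1_i carries the structure of an algebra in C, with multiplication the canonical isomorphism 1_i ⊗ 1_i ≅ 1_i and unit the projection p_i : 1 → 1_i, and also the structure of a coalgebra with counit the inclusion i_i : 1_i → 1. -/
/-!
STATEMENT 7: Let `C` be a monoidal category whose unit decomposes as a finite
biproduct `𝟙_C ≅ ⨁ᵢ 1ᵢ` with `1ᵢ ⊗ 1ⱼ = 0` for `i ≠ j`. Then each `1ᵢ` carries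
the structure of an algebra in `C`, with multiplication the canonical isomorphism
`1ᵢ ⊗ 1ᵢ ≅ 1ᵢ` and unit the projection `pᵢ : 𝟙_C ⟶ 1ᵢ`, and also the structure of
a coalgebra with counit the inclusion `ιᵢ : 1ᵢ ⟶ 𝟙_C`.
-/

open CategoryTheory CategoryTheory.Limits MonoidalCategory

universe v u

theorem unit_summands_are_algebras_and_coalgebras
    (C : Type u) [Category.{v} C] [Preadditive C] [HasFiniteBiproducts C]
    [MonoidalCategory C] [MonoidalPreadditive C]
    (ι : Type) [Fintype ι] (U : ι → C) (e : 𝟙_ C ≅ ⨁ U)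
    (hz : ∀ i j : ι, i ≠ j → IsZero (U i ⊗ U j)) (i : ι) :
    ∃ (mul : U i ⊗ U i ⟶ U i) (one : 𝟙_ C ⟶ U i)
      (comul : U i ⟶ U i ⊗ U i) (counit : U i ⟶ 𝟙_ C),
      -- the unit is the canonical projection, the counit the canonical inclusion
      one = e.hom ≫ biproduct.π U i ∧
      counit = biproduct.ι U i ≫ e.inv ∧
      -- the multiplication is the canonical isomorphism `1ᵢ ⊗ 1ᵢ ≅ 1ᵢ`,
      -- and the comultiplication is its inverse
      IsIso mul ∧
      comul ≫ mul = 𝟙 (U i) ∧ mul ≫ comul = 𝟙 (U i ⊗ U i) ∧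
      -- algebra (monoid object) axioms
      (one ▷ U i) ≫ mul = (λ_ (U i)).hom ∧
      (U i ◁ one) ≫ mul = (ρ_ (U i)).hom ∧
      (mul ▷ U i) ≫ mul = (α_ (U i) (U i) (U i)).hom ≫ (U i ◁ mul) ≫ mul ∧
      -- coalgebra (comonoid object) axioms
      comul ≫ (counit ▷ U i) = (λ_ (U i)).inv ∧
      comul ≫ (U i ◁ counit) = (ρ_ (U i)).inv ∧
      comul ≫ (U i ◁ comul) = comul ≫ (comul ▷ U i) ≫ (α_ (U i) (U i) (U i)).hom := by
  set one : 𝟙_ C ⟶ U i := e.hom ≫ biproduct.π U i with hone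
  set eps : U i ⟶ 𝟙_ C := biproduct.ι U i ≫ e.inv with heps
  have h1 : eps ≫ one = 𝟙 (U i) := by simp [hone, heps]
  -- the key zero computations, using `1ᵢ ⊗ 1ⱼ = 0` for `i ≠ j`
  have hsumL : U i ◁ (biproduct.π U i ≫ biproduct.ι U i) = 𝟙 (U i ⊗ ⨁ U) := by
    have htot : (∑ j, biproduct.π U j ≫ biproduct.ι U j) = 𝟙 (⨁ U) :=
      biproduct.total
    have hw := congrArg (fun f => U i ◁ f) htot
    simp only [whiskerLeft_sum] at hw
    rw [Finset.sum_eq_single i] at hw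
    · simpa using hw
    · intro j _ hj
      rw [MonoidalCategory.whiskerLeft_comp]
      have hz' : (U i ◁ biproduct.π U j : _ ⟶ U i ⊗ U j) = 0 :=
        (hz i j fun h => hj h.symm).eq_zero_of_tgt _
      rw [hz', zero_comp]
    · intro h; exact absurd (Finset.mem_univ i) h
  have hsumR : (biproduct.π U i ≫ biproduct.ι U i) ▷ U i = 𝟙 ((⨁ U) ⊗ U i) := by
    have htot : (∑ j, biproduct.π U j ≫ biproduct.ι U j) = 𝟙 (⨁ U) :=
      biproduct.total
    have hw := congrArg (fun f => f ▷ U i) htot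
    simp only [sum_whiskerRight] at hw
    rw [Finset.sum_eq_single i] at hw
    · simpa using hw
    · intro j _ hj
      rw [MonoidalCategory.comp_whiskerRight]
      have hz' : (biproduct.π U j ▷ U i : _ ⟶ U j ⊗ U i) = 0 :=
        (hz j i fun h => hj h).eq_zero_of_tgt _
      rw [hz', zero_comp]
    · intro h; exact absurd (Finset.mem_univ i) h
  -- `U i ◁ eps` is a two-sided inverse of `U i ◁ one`
  have hL : (U i ◁ one) ≫ (U i ◁ eps) = 𝟙 (U i ⊗ 𝟙_ C) := by
    rw [← MonoidalCategory.whiskerLeft_comp, hone, heps]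
    rw [show (e.hom ≫ biproduct.π U i) ≫ biproduct.ι U i ≫ e.inv
        = e.hom ≫ (biproduct.π U i ≫ biproduct.ι U i) ≫ e.inv by simp]
    rw [MonoidalCategory.whiskerLeft_comp, MonoidalCategory.whiskerLeft_comp, hsumL]
    simp [← MonoidalCategory.whiskerLeft_comp]
  have hL' : (U i ◁ eps) ≫ (U i ◁ one) = 𝟙 (U i ⊗ U i) := by
    rw [← MonoidalCategory.whiskerLeft_comp, h1, MonoidalCategory.whiskerLeft_id]
  -- `eps ▷ U i` is a two-sided inverse of `one ▷ U i`
  have hR : (one ▷ U i) ≫ (eps ▷ U i) = 𝟙 (𝟙_ C ⊗ U i) := by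
    rw [← MonoidalCategory.comp_whiskerRight, hone, heps]
    rw [show (e.hom ≫ biproduct.π U i) ≫ biproduct.ι U i ≫ e.inv
        = e.hom ≫ (biproduct.π U i ≫ biproduct.ι U i) ≫ e.inv by simp]
    rw [MonoidalCategory.comp_whiskerRight, MonoidalCategory.comp_whiskerRight, hsumR]
    simp [← MonoidalCategory.comp_whiskerRight]
  have hR' : (eps ▷ U i) ≫ (one ▷ U i) = 𝟙 (U i ⊗ U i) := by
    rw [← MonoidalCategory.comp_whiskerRight, h1, MonoidalCategory.id_whiskerRight]
  haveI hLiso : IsIso (U i ◁ one) := ⟨U i ◁ eps, hL, hL'⟩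
  haveI hRiso : IsIso (one ▷ U i) := ⟨eps ▷ U i, hR, hR'⟩
  haveI hLepsiso : IsIso (U i ◁ eps) := ⟨U i ◁ one, hL', hL⟩
  set mul : U i ⊗ U i ⟶ U i := (U i ◁ eps) ≫ (ρ_ (U i)).hom with hmul
  haveI hmuliso : IsIso mul := by rw [hmul]; infer_instance
  set comul : U i ⟶ U i ⊗ U i := inv mul with hcomul
  have hcm : comul ≫ mul = 𝟙 (U i) := by rw [hcomul]; simp
  have hmc : mul ≫ comul = 𝟙 (U i ⊗ U i) := by rw [hcomul]; simp
  -- right unit law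
  have hru : (U i ◁ one) ≫ mul = (ρ_ (U i)).hom := by
    rw [hmul, ← Category.assoc, hL, Category.id_comp]
  -- left unit law
  have hlu : (one ▷ U i) ≫ mul = (λ_ (U i)).hom := by
    rw [hmul, ← Category.assoc, ← whisker_exchange, Category.assoc]
    rw [MonoidalCategory.whiskerRight_id, MonoidalCategory.id_whiskerLeft]
    simp [← unitors_equal, h1]
  -- associativity
  have hassoc : (mul ▷ U i) ≫ mul
      = (α_ (U i) (U i) (U i)).hom ≫ (U i ◁ mul) ≫ mul := by
    rw [← cancel_epi ((U i ◁ one) ▷ U i)]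
    have lhs : ((U i ◁ one) ▷ U i) ≫ (mul ▷ U i) ≫ mul
        = ((ρ_ (U i)).hom ▷ U i) ≫ mul := by
      rw [← Category.assoc, ← MonoidalCategory.comp_whiskerRight, hru]
    have rhs : ((U i ◁ one) ▷ U i) ≫ (α_ (U i) (U i) (U i)).hom ≫ (U i ◁ mul) ≫ mul
        = ((ρ_ (U i)).hom ▷ U i) ≫ mul := by
      rw [MonoidalCategory.associator_naturality_middle_assoc]
      rw [← Category.assoc (U i ◁ (one ▷ U i)), ← MonoidalCategory.whiskerLeft_comp, hlu]
      rw [← Category.assoc, MonoidalCategory.triangle]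
    rw [lhs, rhs]
  -- counit laws
  have hcl : comul ≫ (eps ▷ U i) = (λ_ (U i)).inv := by
    have e1 : (eps ▷ U i) = mul ≫ (λ_ (U i)).inv := by
      rw [← cancel_epi (one ▷ U i), hR, ← Category.assoc, hlu, Iso.hom_inv_id]
    rw [e1, ← Category.assoc, hcm, Category.id_comp]
  have hcr : comul ≫ (U i ◁ eps) = (ρ_ (U i)).inv := by
    have e2 : (U i ◁ eps) = mul ≫ (ρ_ (U i)).inv := by
      rw [hmul, Category.assoc, Iso.hom_inv_id, Category.comp_id]
    rw [e2, ← Category.assoc, hcm, Category.id_comp]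
  -- coassociativity
  have hcoassoc : comul ≫ (U i ◁ comul)
      = comul ≫ (comul ▷ U i) ≫ (α_ (U i) (U i) (U i)).hom := by
    haveI : IsIso (U i ◁ mul) := inferInstance
    rw [← cancel_mono ((U i ◁ mul) ≫ mul)]
    have lhs : (comul ≫ (U i ◁ comul)) ≫ (U i ◁ mul) ≫ mul = 𝟙 (U i) := by
      rw [Category.assoc, ← Category.assoc (U i ◁ comul), ← MonoidalCategory.whiskerLeft_comp,
        hcm, MonoidalCategory.whiskerLeft_id, Category.id_comp, hcm]
    have rhs : (comul ≫ (comul ▷ U i) ≫ (α_ (U i) (U i) (U i)).hom) ≫ (U i ◁ mul) ≫ mul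
        = 𝟙 (U i) := by
      rw [Category.assoc, Category.assoc, ← hassoc]
      rw [← Category.assoc (comul ▷ U i), ← MonoidalCategory.comp_whiskerRight, hcm,
        MonoidalCategory.id_whiskerRight, Category.id_comp, hcm]
    rw [lhs, rhs]
  exact ⟨mul, one, comul, eps, hone, heps, hmuliso, hcm, hmc, hlu, hru, hassoc, hcl, hcr, hcoassoc⟩
end
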